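/- For every integer n ≥ 1, we have 240·Σ_{m=1}^{n−1} σ_1(m)·σ_3(n−m) = 21·σ_5(n) + (10 − 30n)·σ_3(n) − σ_1(n). -/

import Mathlib

/-- The divisor power sum `σ_k(n) = ∑_{d ∣ n} d^k`. -/
def sigma' (k n : ℕ) : ℕ := ∑ d ∈ n.divisors, d ^ k

open Finset

/-- power sum lemmas -/
lemma ps1 (e : ℕ) : 2 * ∑ a ∈ Ico 1 e, (a:ℤ) = (e:ℤ)^2 - e := by
  induction e with
  | zero => simp
  | succ k ih =>
    rcases Nat.eq_zero_or_pos k with rfl | hk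
    · simp
    · rw [Finset.sum_Ico_succ_top hk]
      push_cast
      ring_nf
      ring_nf at ih
      linarith

lemma ps2 (e : ℕ) : 6 * ∑ a ∈ Ico 1 e, (a:ℤ)^2 = 2*(e:ℤ)^3 - 3*(e:ℤ)^2 + e := by
  induction e with
  | zero => simp
  | succ k ih =>
    rcases Nat.eq_zero_or_pos k with rfl | hk
    · simp
    · rw [Finset.sum_Ico_succ_top hk]
      push_cast
      ring_nf
      ring_nf at ih
      linarith

lemma ps3 (e : ℕ) : 4 * ∑ a ∈ Ico 1 e, (a:ℤ)^3 = (e:ℤ)^4 - 2*(e:ℤ)^3 + (e:ℤ)^2 := by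
  induction e with
  | zero => simp
  | succ k ih =>
    rcases Nat.eq_zero_or_pos k with rfl | hk
    · simp
    · rw [Finset.sum_Ico_succ_top hk]
      push_cast
      ring_nf
      ring_nf at ih
      linarith

lemma ps4 (e : ℕ) : 30 * ∑ a ∈ Ico 1 e, (a:ℤ)^4 = 6*(e:ℤ)^5 - 15*(e:ℤ)^4 + 10*(e:ℤ)^3 - e := by
  induction e with
  | zero => simp
  | succ k ih =>
    rcases Nat.eq_zero_or_pos k with rfl | hk
    · simp
    · rw [Finset.sum_Ico_succ_top hk]
      push_cast
      ring_nf
      ring_nf at ih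
      linarith

lemma ps0 (e : ℕ) (he : 0 < e) : ∑ _a ∈ Ico 1 e, (1:ℤ) = (e:ℤ) - 1 := by
  rw [Finset.sum_const, Nat.card_Ico, nsmul_eq_mul, mul_one]
  omega

abbrev Quad := ℕ × ℕ × ℕ × ℕ

def swap4 (p : Quad) : Quad := (p.2.1, p.1, p.2.2.2, p.2.2.1)

def Qset (n : ℕ) : Finset Quad :=
  (Finset.range (n+1) ×ˢ Finset.range (n+1) ×ˢ Finset.range (n+1) ×ˢ Finset.range (n+1)).filter
    fun p => p.1 * p.2.2.1 + p.2.1 * p.2.2.2 = n ∧ 0 < p.1 ∧ 0 < p.2.1 ∧ 0 < p.2.2.1 ∧ 0 < p.2.2.2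

lemma mem_Qset {n : ℕ} {p : Quad} :
    p ∈ Qset n ↔ p.1 * p.2.2.1 + p.2.1 * p.2.2.2 = n ∧
      0 < p.1 ∧ 0 < p.2.1 ∧ 0 < p.2.2.1 ∧ 0 < p.2.2.2 := by
  obtain ⟨a, b, x, y⟩ := p
  simp only [Qset, Finset.mem_filter, Finset.mem_product, Finset.mem_range]
  constructor
  · rintro ⟨_, h⟩; exact h
  · rintro ⟨h, ha, hb, hx, hy⟩
    refine ⟨⟨?_, ?_, ?_, ?_⟩, h, ha, hb, hx, hy⟩ <;> nlinarith

lemma sum_swap4 (n : ℕ) (f : Quad → ℤ) (P : Quad → Prop) [DecidablePred P] :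
    ∑ p ∈ (Qset n).filter P, f p
      = ∑ p ∈ (Qset n).filter (fun p => P (swap4 p)), f (swap4 p) := by
  refine Finset.sum_nbij' swap4 swap4 ?_ ?_ ?_ ?_ ?_
  · rintro ⟨a,b,x,y⟩ hp
    simp only [Finset.mem_filter, mem_Qset] at *
    simp only [swap4] at *
    obtain ⟨⟨h1, h2, h3, h4, h5⟩, hP⟩ := hp
    exact ⟨⟨by rw [Nat.add_comm]; exact h1, h3, h2, h5, h4⟩, hP⟩
  · rintro ⟨a,b,x,y⟩ hp
    simp only [Finset.mem_filter, mem_Qset] at *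
    simp only [swap4] at *
    obtain ⟨⟨h1, h2, h3, h4, h5⟩, hP⟩ := hp
    exact ⟨⟨by rw [Nat.add_comm]; exact h1, h3, h2, h5, h4⟩, hP⟩
  · rintro ⟨a,b,x,y⟩ _; rfl
  · rintro ⟨a,b,x,y⟩ _; rfl
  · rintro ⟨a,b,x,y⟩ _; rfl

lemma split3 {α : Type*} [DecidableEq α] (s : Finset α) (f : α → ℤ) (u v : α → ℕ) :
    ∑ p ∈ s, f p
      = ∑ p ∈ s.filter (fun p => u p < v p), f p
        + ∑ p ∈ s.filter (fun p => v p < u p), f p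
        + ∑ p ∈ s.filter (fun p => u p = v p), f p := by
  classical
  rw [← Finset.sum_filter_add_sum_filter_not s (fun p => u p < v p) f]
  have h2 : ∑ p ∈ s.filter (fun p => ¬ u p < v p), f p
      = ∑ p ∈ s.filter (fun p => v p < u p), f p
        + ∑ p ∈ s.filter (fun p => u p = v p), f p := by
    rw [← Finset.sum_filter_add_sum_filter_not (s.filter (fun p => ¬ u p < v p))
        (fun p => v p < u p) f, Finset.filter_filter, Finset.filter_filter]
    congr 1
    · apply Finset.sum_congr _ (fun _ _ => rfl)
      apply Finset.filter_congr; intro p _; constructor <;> omega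
    · apply Finset.sum_congr _ (fun _ _ => rfl)
      apply Finset.filter_congr; intro p _; constructor <;> omega
  omega

lemma slide (n : ℕ) (f : Quad → ℤ) :
    ∑ p ∈ (Qset n).filter (fun p => p.1 < p.2.1), f p
      = ∑ p ∈ (Qset n).filter (fun p => p.2.2.2 < p.2.2.1),
          f (p.1, p.1 + p.2.1, p.2.2.1 - p.2.2.2, p.2.2.2) := by
  refine Finset.sum_nbij' (fun p => (p.1, p.2.1 - p.1, p.2.2.1 + p.2.2.2, p.2.2.2))
    (fun p => (p.1, p.1 + p.2.1, p.2.2.1 - p.2.2.2, p.2.2.2)) ?_ ?_ ?_ ?_ ?_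
  · rintro ⟨a,b,x,y⟩ hp
    simp only [Finset.mem_filter, mem_Qset] at *
    obtain ⟨⟨h1, h2, h3, h4, h5⟩, hP⟩ := hp
    have key : a * (x + y) + (b - a) * y = n := by
      have hba : b - a + a = b := by omega
      have : a * (x + y) + (b - a) * y = a * x + (b - a + a) * y := by ring
      rw [hba] at this; omega
    exact ⟨⟨key, h2, by omega, by omega, h5⟩, by omega⟩
  · rintro ⟨a,b,x,y⟩ hp
    simp only [Finset.mem_filter, mem_Qset] at *
    obtain ⟨⟨h1, h2, h3, h4, h5⟩, hP⟩ := hp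
    have key : a * (x - y) + (a + b) * y = n := by
      have hxy : x - y + y = x := by omega
      have : a * (x - y) + (a + b) * y = a * (x - y + y) + b * y := by ring
      rw [hxy] at this; omega
    exact ⟨⟨key, h2, by omega, by omega, h5⟩, by omega⟩
  · rintro ⟨a,b,x,y⟩ hp
    simp only [Finset.mem_filter, mem_Qset] at hp
    simp only [Prod.mk.injEq]
    refine ⟨trivial, by omega, by omega, trivial⟩
  · rintro ⟨a,b,x,y⟩ hp
    simp only [Finset.mem_filter, mem_Qset] at hp
    simp only [Prod.mk.injEq]
    refine ⟨trivial, by omega, by omega, trivial⟩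
  · rintro ⟨a,b,x,y⟩ hp
    simp only [Finset.mem_filter, mem_Qset] at hp
    congr 1
    simp only [Prod.mk.injEq]
    refine ⟨trivial, by omega, by omega, trivial⟩

lemma diag_xy (n : ℕ) (f : Quad → ℤ) :
    ∑ p ∈ (Qset n).filter (fun p => p.2.2.1 = p.2.2.2), f p
      = ∑ q ∈ n.divisorsAntidiagonal.sigma (fun de => Finset.Ico 1 de.2),
          f (q.2, q.1.2 - q.2, q.1.1, q.1.1) := by
  refine Finset.sum_nbij' (fun p => ⟨(p.2.2.1, p.1 + p.2.1), p.1⟩)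
    (fun q => (q.2, q.1.2 - q.2, q.1.1, q.1.1)) ?_ ?_ ?_ ?_ ?_
  · rintro ⟨a,b,x,y⟩ hp
    simp only [Finset.mem_filter, mem_Qset] at hp
    obtain ⟨⟨h1, h2, h3, h4, h5⟩, hP⟩ := hp
    subst hP
    simp only [Finset.mem_sigma, Nat.mem_divisorsAntidiagonal, Finset.mem_Ico]
    have hax : 0 < a * x := Nat.mul_pos h2 h4
    have hbx : 0 < b * x := Nat.mul_pos h3 h4
    have key : x * (a + b) = n := by
      have h6 : x * (a + b) = a * x + b * x := by ring
      omega
    exact ⟨⟨key, by omega⟩, by omega, by omega⟩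
  · rintro ⟨⟨d,e⟩,a⟩ hq
    simp only [Finset.mem_sigma, Nat.mem_divisorsAntidiagonal, Finset.mem_Ico] at hq
    obtain ⟨⟨h1, h2⟩, h3, h4⟩ := hq
    simp only [Finset.mem_filter, mem_Qset]
    have hd : 0 < d := by
      rcases Nat.eq_zero_or_pos d with rfl | h
      · simp at h1; omega
      · exact h
    have key : a * d + (e - a) * d = n := by
      calc a * d + (e - a) * d = (a + (e - a)) * d := by ring
        _ = e * d := by rw [show a + (e - a) = e by omega]
        _ = n := by rw [Nat.mul_comm]; exact h1
    exact ⟨⟨key, by omega, by omega, hd, hd⟩, trivial⟩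
  · rintro ⟨a,b,x,y⟩ hp
    simp only [Finset.mem_filter, mem_Qset] at hp
    obtain ⟨⟨h1, h2, h3, h4, h5⟩, hP⟩ := hp
    simp only [Prod.mk.injEq]
    refine ⟨trivial, by omega, trivial, by omega⟩
  · rintro ⟨⟨d,e⟩,a⟩ hq
    simp only [Finset.mem_sigma, Nat.mem_divisorsAntidiagonal, Finset.mem_Ico] at hq
    have h5 : a + (e - a) = e := by omega
    simp only [h5]
  · rintro ⟨a,b,x,y⟩ hp
    simp only [Finset.mem_filter, mem_Qset] at hp
    obtain ⟨⟨h1, h2, h3, h4, h5⟩, hP⟩ := hp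
    congr 1
    simp only [Prod.mk.injEq]
    refine ⟨trivial, by omega, trivial, by omega⟩

lemma diag_ab (n : ℕ) (f : Quad → ℤ) :
    ∑ p ∈ (Qset n).filter (fun p => p.1 = p.2.1), f p
      = ∑ q ∈ n.divisorsAntidiagonal.sigma (fun de => Finset.Ico 1 de.2),
          f (q.1.1, q.1.1, q.2, q.1.2 - q.2) := by
  refine Finset.sum_nbij' (fun p => ⟨(p.1, p.2.2.1 + p.2.2.2), p.2.2.1⟩)
    (fun q => (q.1.1, q.1.1, q.2, q.1.2 - q.2)) ?_ ?_ ?_ ?_ ?_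
  · rintro ⟨a,b,x,y⟩ hp
    simp only [Finset.mem_filter, mem_Qset] at hp
    obtain ⟨⟨h1, h2, h3, h4, h5⟩, hP⟩ := hp
    subst hP
    simp only [Finset.mem_sigma, Nat.mem_divisorsAntidiagonal, Finset.mem_Ico]
    have hax : 0 < a * x := Nat.mul_pos h2 h4
    have hay : 0 < a * y := Nat.mul_pos h2 h5
    have key : a * (x + y) = n := by
      have h6 : a * (x + y) = a * x + a * y := by ring
      omega
    exact ⟨⟨key, by omega⟩, by omega, by omega⟩
  · rintro ⟨⟨d,e⟩,x⟩ hq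
    simp only [Finset.mem_sigma, Nat.mem_divisorsAntidiagonal, Finset.mem_Ico] at hq
    obtain ⟨⟨h1, h2⟩, h3, h4⟩ := hq
    simp only [Finset.mem_filter, mem_Qset]
    have hd : 0 < d := by
      rcases Nat.eq_zero_or_pos d with rfl | h
      · simp at h1; omega
      · exact h
    have key : d * x + d * (e - x) = n := by
      calc d * x + d * (e - x) = d * (x + (e - x)) := by ring
        _ = d * e := by rw [show x + (e - x) = e by omega]
        _ = n := h1
    exact ⟨⟨key, hd, hd, by omega, by omega⟩, trivial⟩
  · rintro ⟨a,b,x,y⟩ hp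
    simp only [Finset.mem_filter, mem_Qset] at hp
    obtain ⟨⟨h1, h2, h3, h4, h5⟩, hP⟩ := hp
    simp only [Prod.mk.injEq]
    refine ⟨trivial, by omega, trivial, by omega⟩
  · rintro ⟨⟨d,e⟩,x⟩ hq
    simp only [Finset.mem_sigma, Nat.mem_divisorsAntidiagonal, Finset.mem_Ico] at hq
    have h5 : x + (e - x) = e := by omega
    simp only [h5]
  · rintro ⟨a,b,x,y⟩ hp
    simp only [Finset.mem_filter, mem_Qset] at hp
    obtain ⟨⟨h1, h2, h3, h4, h5⟩, hP⟩ := hp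
    congr 1
    simp only [Prod.mk.injEq]
    refine ⟨trivial, by omega, trivial, by omega⟩

lemma sigma'_cast (k n : ℕ) :
    (sigma' k n : ℤ) = ∑ p ∈ n.divisorsAntidiagonal, (p.1 : ℤ) ^ k := by
  rw [Nat.sum_divisorsAntidiagonal (fun d _ => (d : ℤ) ^ k)]
  simp [sigma']

lemma T_eq (n : ℕ) :
    ∑ m ∈ Finset.Ico 1 n, (sigma' 1 m : ℤ) * sigma' 3 (n - m)
      = ∑ p ∈ Qset n, (p.1 : ℤ) * (p.2.1 : ℤ) ^ 3 := by
  have h1 : ∀ m ∈ Finset.Ico 1 n, (sigma' 1 m : ℤ) * sigma' 3 (n - m)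
      = ∑ r ∈ m.divisorsAntidiagonal ×ˢ (n - m).divisorsAntidiagonal,
          (r.1.1 : ℤ) * (r.2.1 : ℤ) ^ 3 := by
    intro m _
    rw [sigma'_cast, sigma'_cast, Finset.sum_mul_sum]
    rw [Finset.sum_product]
    simp [pow_one]
  rw [Finset.sum_congr rfl h1, Finset.sum_sigma'
    (Finset.Ico 1 n) (fun m => m.divisorsAntidiagonal ×ˢ (n - m).divisorsAntidiagonal)
    (fun _ r => (r.1.1 : ℤ) * (r.2.1 : ℤ) ^ 3)]
  refine Finset.sum_nbij' (fun q => (q.2.1.1, q.2.2.1, q.2.1.2, q.2.2.2))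
    (fun p => ⟨p.1 * p.2.2.1, ((p.1, p.2.2.1), (p.2.1, p.2.2.2))⟩) ?_ ?_ ?_ ?_ ?_
  · rintro ⟨m, ⟨⟨a, x⟩, ⟨b, y⟩⟩⟩ hq
    simp only [Finset.mem_sigma, Finset.mem_product, Nat.mem_divisorsAntidiagonal,
      Finset.mem_Ico] at hq
    obtain ⟨⟨hm1, hm2⟩, ⟨hax, hm0⟩, ⟨hby, hnm0⟩⟩ := hq
    dsimp only
    rw [mem_Qset]
    dsimp only
    have ha : 0 < a := by
      rcases Nat.eq_zero_or_pos a with rfl | h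
      · simp at hax; omega
      · exact h
    have hx : 0 < x := by
      rcases Nat.eq_zero_or_pos x with rfl | h
      · simp at hax; omega
      · exact h
    have hb : 0 < b := by
      rcases Nat.eq_zero_or_pos b with rfl | h
      · simp at hby; omega
      · exact h
    have hy : 0 < y := by
      rcases Nat.eq_zero_or_pos y with rfl | h
      · simp at hby; omega
      · exact h
    exact ⟨by omega, ha, hb, hx, hy⟩
  · rintro ⟨a, b, x, y⟩ hp
    rw [mem_Qset] at hp
    obtain ⟨h1, h2, h3, h4, h5⟩ := hp
    simp only [Finset.mem_sigma, Finset.mem_product, Nat.mem_divisorsAntidiagonal,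
      Finset.mem_Ico]
    simp only [show ((a,b,x,y) : Quad).1 = a from rfl, show ((a,b,x,y) : Quad).2.1 = b from rfl,
      show ((a,b,x,y) : Quad).2.2.1 = x from rfl, show ((a,b,x,y) : Quad).2.2.2 = y from rfl]
      at h1 h2 h3 h4 h5
    have hax : 0 < a * x := Nat.mul_pos h2 h4
    have hby : 0 < b * y := Nat.mul_pos h3 h5
    exact ⟨⟨by omega, by omega⟩, ⟨by trivial, by omega⟩, ⟨by omega, by omega⟩⟩
  · rintro ⟨m, ⟨⟨a, x⟩, ⟨b, y⟩⟩⟩ hq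
    simp only [Finset.mem_sigma, Finset.mem_product, Nat.mem_divisorsAntidiagonal,
      Finset.mem_Ico] at hq
    obtain ⟨⟨hm1, hm2⟩, ⟨hax, hm0⟩, ⟨hby, hnm0⟩⟩ := hq
    subst hax
    rfl
  · rintro ⟨a, b, x, y⟩ _
    rfl
  · rintro ⟨m, ⟨⟨a, x⟩, ⟨b, y⟩⟩⟩ _
    rfl

def f0fun : Quad → ℤ := fun p => (p.1 : ℤ) * (p.2.1 : ℤ) ^ 3
def gfun : Quad → ℤ := fun p =>
  2 * (p.2.1 : ℤ) ^ 4 - 4 * (p.1 : ℤ) * (p.2.1 : ℤ) ^ 3 + 3 * (p.1 : ℤ) ^ 2 * (p.2.1 : ℤ) ^ 2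

lemma inner_xy (d e : ℕ) (he : 0 < e) :
    30 * ∑ a ∈ Finset.Ico 1 e, (gfun (a, e - a, d, d) + 8 * f0fun (a, e - a, d, d))
      = 21 * (e:ℤ)^5 - 30 * (e:ℤ)^4 + 10 * (e:ℤ)^3 - e := by
  have h1 : ∀ a ∈ Finset.Ico 1 e, gfun (a, e - a, d, d) + 8 * f0fun (a, e - a, d, d)
      = 2*(e:ℤ)^4*1 + (-4*(e:ℤ)^3)*a + (3*(e:ℤ)^2)*(a:ℤ)^2 + (-2*(e:ℤ))*(a:ℤ)^3 + (a:ℤ)^4 := by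
    intro a ha
    rw [Finset.mem_Ico] at ha
    have hc : ((e - a : ℕ) : ℤ) = (e:ℤ) - a := by
      rw [Nat.cast_sub (by omega)]
    simp only [gfun, f0fun]
    rw [hc]
    ring
  rw [Finset.sum_congr rfl h1, Finset.sum_add_distrib, Finset.sum_add_distrib,
    Finset.sum_add_distrib, Finset.sum_add_distrib, ← Finset.mul_sum, ← Finset.mul_sum,
    ← Finset.mul_sum, ← Finset.mul_sum]
  linear_combination 60*(e:ℤ)^4*(ps0 e he) - 60*(e:ℤ)^3*(ps1 e) + 15*(e:ℤ)^2*(ps2 e)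
    - 15*(e:ℤ)*(ps3 e) + (ps4 e)

lemma inner_ab (d e : ℕ) (he : 0 < e) :
    30 * ∑ x ∈ Finset.Ico 1 e, gfun (d, d, x, e - x)
      = 30 * (d:ℤ)^4 * e - 30 * (d:ℤ)^4 := by
  have h1 : ∀ x ∈ Finset.Ico 1 e, gfun (d, d, x, e - x) = (d:ℤ)^4 := by
    intro x _
    simp only [gfun]
    ring
  rw [Finset.sum_congr rfl h1, Finset.sum_const, Nat.card_Ico, nsmul_eq_mul]
  have : ((e - 1 : ℕ) : ℤ) = (e:ℤ) - 1 := by omega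
  rw [this]
  ring

def gsfun : Quad → ℤ := fun p => gfun (swap4 p)
def f0sfun : Quad → ℤ := fun p => f0fun (swap4 p)
def Egfun : Quad → ℤ := fun p => gfun (p.1, p.1 + p.2.1, p.2.2.1 - p.2.2.2, p.2.2.2)
def Egsfun : Quad → ℤ := fun p => gfun (swap4 (p.1, p.1 + p.2.1, p.2.2.1 - p.2.2.2, p.2.2.2))

theorem ramanujan_DG4 (n : ℕ) (hn : 1 ≤ n) :
    240 * ∑ m ∈ Finset.Ico 1 n, (sigma' 1 m : ℤ) * sigma' 3 (n - m) =
      21 * sigma' 5 n + (10 - 30 * (n : ℤ)) * sigma' 3 n - sigma' 1 n := by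
  classical
  rw [T_eq n]
  have hT' : ∑ p ∈ Qset n, (p.1 : ℤ) * (p.2.1 : ℤ) ^ 3 = ∑ p ∈ Qset n, f0fun p := rfl
  rw [hT']
  -- splits
  have split_f0 : ∑ p ∈ Qset n, f0fun p
      = ∑ p ∈ (Qset n).filter (fun p => p.2.2.1 < p.2.2.2), f0fun p
        + ∑ p ∈ (Qset n).filter (fun p => p.2.2.2 < p.2.2.1), f0fun p
        + ∑ p ∈ (Qset n).filter (fun p => p.2.2.1 = p.2.2.2), f0fun p :=
    split3 (Qset n) f0fun (fun p => p.2.2.1) (fun p => p.2.2.2)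
  have split_g_xy : ∑ p ∈ Qset n, gfun p
      = ∑ p ∈ (Qset n).filter (fun p => p.2.2.1 < p.2.2.2), gfun p
        + ∑ p ∈ (Qset n).filter (fun p => p.2.2.2 < p.2.2.1), gfun p
        + ∑ p ∈ (Qset n).filter (fun p => p.2.2.1 = p.2.2.2), gfun p :=
    split3 (Qset n) gfun (fun p => p.2.2.1) (fun p => p.2.2.2)
  have split_g_ab : ∑ p ∈ Qset n, gfun p
      = ∑ p ∈ (Qset n).filter (fun p => p.1 < p.2.1), gfun p
        + ∑ p ∈ (Qset n).filter (fun p => p.2.1 < p.1), gfun p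
        + ∑ p ∈ (Qset n).filter (fun p => p.1 = p.2.1), gfun p :=
    split3 (Qset n) gfun (fun p => p.1) (fun p => p.2.1)
  -- swaps
  have sw_f0 : ∑ p ∈ (Qset n).filter (fun p => p.2.2.1 < p.2.2.2), f0fun p
      = ∑ p ∈ (Qset n).filter (fun p => p.2.2.2 < p.2.2.1), f0sfun p := by
    rw [sum_swap4 n f0fun (fun p => p.2.2.1 < p.2.2.2)]
    exact Finset.sum_congr (Finset.filter_congr (fun p _ => Iff.rfl)) (fun p _ => rfl)
  have sw_g : ∑ p ∈ (Qset n).filter (fun p => p.2.2.1 < p.2.2.2), gfun p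
      = ∑ p ∈ (Qset n).filter (fun p => p.2.2.2 < p.2.2.1), gsfun p := by
    rw [sum_swap4 n gfun (fun p => p.2.2.1 < p.2.2.2)]
    exact Finset.sum_congr (Finset.filter_congr (fun p _ => Iff.rfl)) (fun p _ => rfl)
  have sw_g2 : ∑ p ∈ (Qset n).filter (fun p => p.2.1 < p.1), gfun p
      = ∑ p ∈ (Qset n).filter (fun p => p.1 < p.2.1), gsfun p := by
    rw [sum_swap4 n gfun (fun p => p.2.1 < p.1)]
    exact Finset.sum_congr (Finset.filter_congr (fun p _ => Iff.rfl)) (fun p _ => rfl)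
  -- slides
  have sl_g : ∑ p ∈ (Qset n).filter (fun p => p.1 < p.2.1), gfun p
      = ∑ p ∈ (Qset n).filter (fun p => p.2.2.2 < p.2.2.1), Egfun p :=
    slide n gfun
  have sl_gs : ∑ p ∈ (Qset n).filter (fun p => p.1 < p.2.1), gsfun p
      = ∑ p ∈ (Qset n).filter (fun p => p.2.2.2 < p.2.2.1), Egsfun p :=
    slide n gsfun
  -- pointwise key identity summed over y<x
  have key : ∑ p ∈ (Qset n).filter (fun p => p.2.2.2 < p.2.2.1),
        (8 * (f0fun p + f0sfun p) + gfun p + gsfun p)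
      = ∑ p ∈ (Qset n).filter (fun p => p.2.2.2 < p.2.2.1), (Egfun p + Egsfun p) := by
    apply Finset.sum_congr rfl
    intro p _
    simp only [gfun, f0fun, gsfun, f0sfun, Egfun, Egsfun, swap4]
    push_cast
    ring
  have keyL : ∑ p ∈ (Qset n).filter (fun p => p.2.2.2 < p.2.2.1),
        (8 * (f0fun p + f0sfun p) + gfun p + gsfun p)
      = 8 * ∑ p ∈ (Qset n).filter (fun p => p.2.2.2 < p.2.2.1), f0fun p
        + 8 * ∑ p ∈ (Qset n).filter (fun p => p.2.2.2 < p.2.2.1), f0sfun p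
        + ∑ p ∈ (Qset n).filter (fun p => p.2.2.2 < p.2.2.1), gfun p
        + ∑ p ∈ (Qset n).filter (fun p => p.2.2.2 < p.2.2.1), gsfun p := by
    rw [Finset.sum_add_distrib, Finset.sum_add_distrib, ← Finset.mul_sum,
      Finset.sum_add_distrib]
    ring
  have keyR : ∑ p ∈ (Qset n).filter (fun p => p.2.2.2 < p.2.2.1), (Egfun p + Egsfun p)
      = ∑ p ∈ (Qset n).filter (fun p => p.2.2.2 < p.2.2.1), Egfun p
        + ∑ p ∈ (Qset n).filter (fun p => p.2.2.2 < p.2.2.1), Egsfun p :=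
    Finset.sum_add_distrib
  -- x=y diagonal combined sum
  have hBA : ∑ p ∈ (Qset n).filter (fun p => p.2.2.1 = p.2.2.2), (gfun p + 8 * f0fun p)
      = ∑ p ∈ (Qset n).filter (fun p => p.2.2.1 = p.2.2.2), gfun p
        + 8 * ∑ p ∈ (Qset n).filter (fun p => p.2.2.1 = p.2.2.2), f0fun p := by
    rw [Finset.sum_add_distrib, ← Finset.mul_sum]
  -- diagonal evaluations
  have hDxy : 30 * ∑ p ∈ (Qset n).filter (fun p => p.2.2.1 = p.2.2.2), (gfun p + 8 * f0fun p)
      = ∑ q ∈ n.divisorsAntidiagonal,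
          (21 * (q.2 : ℤ)^5 - 30 * (q.2 : ℤ)^4 + 10 * (q.2 : ℤ)^3 - (q.2 : ℤ)) := by
    rw [diag_xy n (fun p => gfun p + 8 * f0fun p), Finset.sum_sigma, Finset.mul_sum]
    apply Finset.sum_congr rfl
    rintro ⟨d, e⟩ hde
    rw [Nat.mem_divisorsAntidiagonal] at hde
    have he : 0 < e := by
      rcases Nat.eq_zero_or_pos e with rfl | h
      · simp at hde; omega
      · exact h
    exact inner_xy d e he
  have hDab : 30 * ∑ p ∈ (Qset n).filter (fun p => p.1 = p.2.1), gfun p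
      = ∑ q ∈ n.divisorsAntidiagonal,
          (30 * ((q.1 : ℤ)^4 * (q.2 : ℤ)) - 30 * (q.1 : ℤ)^4) := by
    rw [diag_ab n gfun, Finset.sum_sigma, Finset.mul_sum]
    apply Finset.sum_congr rfl
    rintro ⟨d, e⟩ hde
    rw [Nat.mem_divisorsAntidiagonal] at hde
    have he : 0 < e := by
      rcases Nat.eq_zero_or_pos e with rfl | h
      · simp at hde; omega
      · exact h
    linear_combination inner_ab d e he
  -- antidiagonal sums to sigma
  have ad2 : ∀ k : ℕ, ∑ q ∈ n.divisorsAntidiagonal, (q.2 : ℤ)^k = (sigma' k n : ℤ) := by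
    intro k
    rw [Nat.sum_divisorsAntidiagonal' (f := fun _ e => (e : ℤ)^k)]
    simp [sigma']
  have ad1 : ∑ q ∈ n.divisorsAntidiagonal, (q.1 : ℤ)^4 = (sigma' 4 n : ℤ) := by
    rw [Nat.sum_divisorsAntidiagonal (f := fun d _ => (d : ℤ)^4)]
    simp [sigma']
  have adn : ∑ q ∈ n.divisorsAntidiagonal, (q.1 : ℤ)^4 * (q.2 : ℤ)
      = (n : ℤ) * (sigma' 3 n : ℤ) := by
    have h1 : ∀ q ∈ n.divisorsAntidiagonal, (q.1 : ℤ)^4 * (q.2 : ℤ) = (q.1 : ℤ)^3 * (n : ℤ) := by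
      intro q hq
      rw [Nat.mem_divisorsAntidiagonal] at hq
      have : (q.1 : ℤ) * (q.2 : ℤ) = (n : ℤ) := by exact_mod_cast congrArg Nat.cast hq.1
      linear_combination (q.1 : ℤ)^3 * this
    rw [Finset.sum_congr rfl h1]
    rw [← Finset.sum_mul, Nat.sum_divisorsAntidiagonal (f := fun d _ => (d : ℤ)^3)]
    have : (∑ d ∈ n.divisors, (d : ℤ)^3) = (sigma' 3 n : ℤ) := by simp [sigma']
    rw [this]; ring
  have hfin1 : ∑ q ∈ n.divisorsAntidiagonal,
        (21 * (q.2 : ℤ)^5 - 30 * (q.2 : ℤ)^4 + 10 * (q.2 : ℤ)^3 - (q.2 : ℤ))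
      = 21 * (sigma' 5 n : ℤ) - 30 * (sigma' 4 n : ℤ) + 10 * (sigma' 3 n : ℤ)
        - (sigma' 1 n : ℤ) := by
    rw [Finset.sum_sub_distrib, Finset.sum_add_distrib, Finset.sum_sub_distrib,
      ← Finset.mul_sum, ← Finset.mul_sum, ← Finset.mul_sum, ad2 5, ad2 4, ad2 3]
    have := ad2 1
    simp only [pow_one] at this
    rw [this]
  have hfin2 : ∑ q ∈ n.divisorsAntidiagonal,
        (30 * ((q.1 : ℤ)^4 * (q.2 : ℤ)) - 30 * (q.1 : ℤ)^4)
      = 30 * ((n : ℤ) * (sigma' 3 n : ℤ)) - 30 * (sigma' 4 n : ℤ) := by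
    rw [Finset.sum_sub_distrib, ← Finset.mul_sum, ← Finset.mul_sum, adn, ad1]
  linarith [key, keyL, keyR, split_f0, split_g_xy, split_g_ab, sw_f0, sw_g, sw_g2,
    sl_g, sl_gs, hBA, hDxy, hDab, hfin1, hfin2]
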